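/- arXiv:1608.08592 — 3 statements merged into one kernel-verified Lean document; each statement's English description precedes it below -/
import Mathlib

section
/- Let q ≥ 2, m ≥ 3, Σ = {x_1, …, x_q}, and let S = ⋃_{i=1}^q {x_i^m, x_i^{m+1}} ∪ ⋃_{i ≠ j} {x_i x_j^{m−1}, x_j^{m−1} x_i}. Then the word y = x_1^{m−2} x_2^{m−2} ⋯ x_{q−1}^{m−2} x_q^{qm² − 3qm + 3m + 2q − 4} x_1, which has length qm² − 2qm + 2m − 1, is not in S^†. -/
/-- `Shuffle u v w` means that the word `w` is an interleaving (shuffle) of the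
words `u` and `v`. -/
inductive Shuffle {α : Type*} : List α → List α → List α → Prop
  | nil : Shuffle [] [] []
  | left {a : α} {u v w : List α} : Shuffle u v w → Shuffle (a :: u) v (a :: w)
  | right {a : α} {u v w : List α} : Shuffle u v w → Shuffle u (a :: v) (a :: w)

/-- `IterShuffle S y` means `y` belongs to the iterated shuffle `S^†`, i.e. `y`
can be obtained by shuffling together finitely many (possibly zero) words of `S`. -/
inductive IterShuffle {α : Type*} (S : Set (List α)) : List α → Prop
  | nil : IterShuffle S []
  | step {u w y : List α} : u ∈ S → IterShuffle S w → Shuffle u w y → IterShuffle S y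

namespace ProtoAux

open List

variable {α : Type*}

lemma shuffle_count [DecidableEq α] {u v w : List α} (h : Shuffle u v w) (a : α) :
    w.count a = u.count a + v.count a := by
  induction h with
  | nil => simp
  | left h ih => simp only [List.count_cons, ih]; ring
  | right h ih => simp only [List.count_cons, ih]; ring

lemma shuffle_length {u v w : List α} (h : Shuffle u v w) :
    w.length = u.length + v.length := by
  induction h with
  | nil => simp
  | left h ih => simp only [List.length_cons, ih]; omega
  | right h ih => simp only [List.length_cons, ih]; omega

lemma shuffle_sublist_left {u v w : List α} (h : Shuffle u v w) : u <+ w := by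
  induction h with
  | nil => exact List.Sublist.slnil
  | left h ih => exact ih.cons₂ _
  | right h ih => exact ih.cons _

lemma shuffle_sublist_right {u v w : List α} (h : Shuffle u v w) : v <+ w := by
  induction h with
  | nil => exact List.Sublist.slnil
  | left h ih => exact ih.cons _
  | right h ih => exact ih.cons₂ _

lemma cons_sublist_of_notMem {a : α} {l p s : List α} (h : a :: l <+ p ++ s)
    (ha : a ∉ p) : a :: l <+ s := by
  induction p with
  | nil => simpa using h
  | cons b p ih =>
    simp only [List.cons_append] at h
    rcases List.sublist_cons_iff.mp h with h' | ⟨r, hr, h'⟩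
    · exact ih h' (fun hm => ha (List.mem_cons_of_mem _ hm))
    · injection hr with h1 h2
      exact absurd (by rw [h1]; exact List.mem_cons_self) ha

lemma arith_aux (b c d : ℕ) : c * (b+3) + d * (b+4) ≠ b*b + 5*b + 5 := by
  intro h
  have e1 : (c+d)*(b+3) = c*(b+3) + d*(b+3) := by ring
  have e2 : d*(b+4) = d*(b+3) + d := by ring
  have e3 : (b+2)*(b+3) = b*b + 5*b + 6 := by ring
  have h2 : (c+d)*(b+3) + (d+1) = (b+2)*(b+3) := by linarith
  have hcd : c + d ≤ b + 2 := by
    by_contra hgt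
    push_neg at hgt
    have h3 : (b+3)*(b+3) ≤ (c+d)*(b+3) := mul_le_mul_left hgt _
    have e4 : (b+3)*(b+3) = (b+2)*(b+3) + (b+3) := by ring
    linarith
  have e5 : (b+2)*(b+3) = (b+2-(c+d))*(b+3) + (c+d)*(b+3) := by
    rw [← Nat.add_mul, Nat.sub_add_cancel hcd]
  have hd1 : d + 1 = (b + 2 - (c+d)) * (b+3) := by linarith
  have hbd : b + 2 ≤ d := by
    have h4 : 1 ≤ b + 2 - (c+d) := by
      rcases Nat.eq_zero_or_pos (b+2-(c+d)) with h0 | h0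
      · rw [h0] at hd1; simp at hd1
      · exact h0
    have h5 : 1*(b+3) ≤ (b+2-(c+d))*(b+3) := mul_le_mul_left h4 _
    have e6 : 1*(b+3) = b+3 := by ring
    linarith
  have h6 : (b+2)*(b+4) ≤ d*(b+4) := mul_le_mul_left hbd _
  have e7 : (b+2)*(b+4) = b*b + 6*b + 8 := by ring
  linarith [Nat.zero_le (c*(b+3))]

lemma arith_main (q m c d : ℕ) (hq : 2 ≤ q) (hm : 3 ≤ m) :
    q * m ^ 2 - 3 * q * m + 3 * m + 2 * q - 4 ≠
      ((q-1)*(m-2) + 1) * (m-1) + c * m + d * (m+1) := by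
  obtain ⟨a, rfl⟩ : ∃ a, q = a + 2 := ⟨q - 2, by omega⟩
  obtain ⟨b, rfl⟩ : ∃ b, m = b + 3 := ⟨m - 3, by omega⟩
  intro h
  have e : (a+2) * (b+3) ^ 2 = 3 * (a+2) * (b+3) + ((a+2)*(b*b+3*b)) := by ring
  have hN : (a+2) * (b+3) ^ 2 - 3 * (a+2) * (b+3) + 3 * (b+3) + 2 * (a+2) - 4
      = (a+2)*(b*b+3*b) + 3*b + 2*a + 9 := by
    rw [e]
    generalize 3 * (a+2) * (b+3) = A
    generalize (a+2)*(b*b+3*b) = B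
    omega
  rw [hN] at h
  have e1 : a + 2 - 1 = a + 1 := rfl
  have e2 : b + 3 - 2 = b + 1 := rfl
  have e3 : b + 3 - 1 = b + 2 := rfl
  rw [e1, e2, e3] at h
  have e5 : (a+2)*(b*b+3*b) + 3*b + 2*a + 9
      = ((a+1)*(b+1) + 1)*(b+2) + (b*b + 5*b + 5) := by ring
  have h7 : c*(b+3) + d*(b+4) = b*b + 5*b + 5 := by linarith
  exact arith_aux b c d h7

lemma sub_helper (X N : ℕ) : X + N + 1 - N = X + 1 := by omega

/-- The key invariant lemma: any word obtainable as an iterated shuffle of `S`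
which is a sublist of `Y = B ++ top^N ++ [z0]` satisfies the counting relation. -/
lemma invariant (q m : ℕ) (hm : 3 ≤ m)
    (S : Set (List (Fin q)))
    (hS : S = {w | ∃ i : Fin q, w = List.replicate m i ∨ w = List.replicate (m + 1) i} ∪
              {w | ∃ i j : Fin q, i ≠ j ∧
                (w = i :: List.replicate (m - 1) j ∨
                 w = List.replicate (m - 1) j ++ [i])})
    (top z0 : Fin q) (hne : top ≠ z0)
    (B R : List (Fin q)) (N : ℕ)
    (hBsplit : B = List.replicate (m-2) z0 ++ R)
    (hR0 : z0 ∉ R)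
    (hBtop : B.count top = 0)
    (hBle : ∀ c : Fin q, B.count c ≤ m - 2) :
    ∀ z, IterShuffle S z → z <+ (B ++ List.replicate N top) ++ [z0] →
      ∃ c d : ℕ, z.count top = (z.length - z.count top) * (m-1) + c * m + d * (m+1) := by
  set Y : List (Fin q) := (B ++ List.replicate N top) ++ [z0] with hY
  have hz0top : z0 ≠ top := fun h => hne h.symm
  have hcBz0 : R.count z0 = 0 := List.count_eq_zero.mpr hR0
  have hcYtop : ∀ i : Fin q, i ≠ top → Y.count i ≤ m - 1 := by
    intro i hi
    have h1 : Y.count i = B.count i + (List.replicate N top).count i + [z0].count i := by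
      rw [hY, List.count_append, List.count_append]
    have h2 : (List.replicate N top).count i = 0 := by
      simp [List.count_replicate, hi.symm]
    have h3 : [z0].count i ≤ 1 := List.count_le_length
    have h4 := hBle i
    omega
  have hcYmid : ∀ j : Fin q, j ≠ top → j ≠ z0 → Y.count j ≤ m - 2 := by
    intro j hj hj0
    have h1 : Y.count j = B.count j + (List.replicate N top).count j + [z0].count j := by
      rw [hY, List.count_append, List.count_append]
    have h2 : (List.replicate N top).count j = 0 := by
      simp [List.count_replicate, hj.symm]
    have h3 : [z0].count j = 0 := by
      rw [List.count_eq_zero]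
      simp [hj0]
    have h4 := hBle j
    omega
  -- positional fact 1 : i :: z0^{m-1} is not a sublist of Y
  have hpos1 : ∀ i : Fin q, i ≠ z0 → ¬ (i :: List.replicate (m-1) z0 <+ Y) := by
    intro i hi hsub
    have hYeq : Y = List.replicate (m-2) z0 ++ ((R ++ List.replicate N top) ++ [z0]) := by
      rw [hY, hBsplit]
      simp [List.append_assoc]
    rw [hYeq] at hsub
    have hnotmem : i ∉ List.replicate (m-2) z0 := by
      intro hmem
      exact hi (List.eq_of_mem_replicate hmem)
    have h2 := cons_sublist_of_notMem hsub hnotmem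
    have h3 := h2.count_le z0
    have h4 : (i :: List.replicate (m-1) z0).count z0 = m - 1 := by
      simp [List.count_cons, List.count_replicate, hi]
    have h5 : ((R ++ List.replicate N top) ++ [z0]).count z0 ≤ 1 := by
      rw [List.count_append, List.count_append, hcBz0]
      have h6 : (List.replicate N top).count z0 = 0 := by
        simp [List.count_replicate, hne]
      have h7 : [z0].count z0 ≤ 1 := List.count_le_length
      omega
    omega
  -- positional fact 2 : z0^{m-1} ++ [i] is not a sublist of Y
  have hpos2 : ∀ i : Fin q, i ≠ z0 → ¬ (List.replicate (m-1) z0 ++ [i] <+ Y) := by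
    intro i hi hsub
    rw [hY] at hsub
    obtain ⟨l₁, l₂, heq, h₁, h₂⟩ := List.sublist_append_iff.mp hsub
    rcases List.sublist_cons_iff.mp h₂ with h₂' | ⟨r, hr, hr'⟩
    · rw [List.sublist_nil] at h₂'
      subst h₂'
      rw [List.append_nil] at heq
      subst heq
      have h3 := h₁.count_le z0
      have h4 : (List.replicate (m-1) z0 ++ [i]).count z0 = m - 1 := by
        rw [List.count_append]
        have h4a : [i].count z0 = 0 := by
          rw [List.count_eq_zero]
          simp [Ne.symm hi]
        simp [List.count_replicate, h4a]
      have h5 : (B ++ List.replicate N top).count z0 ≤ m - 2 := by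
        have h6 := hBle z0
        have h7 : (List.replicate N top).count z0 = 0 := by
          simp [List.count_replicate, hne]
        rw [List.count_append, h7]
        omega
      omega
    · obtain rfl : r = [] := List.sublist_nil.mp hr'
      subst hr
      have h3 := congrArg List.getLast? heq
      rw [List.getLast?_concat, List.getLast?_concat] at h3
      injection h3 with h5
      exact hi h5
  -- the induction
  intro z hz
  induction hz with
  | nil =>
    intro _
    exact ⟨0, 0, by simp⟩
  | @step u w z hu hiter hsh ih =>
    intro hzY
    have hwz : w <+ z := shuffle_sublist_right hsh
    have huz : u <+ z := shuffle_sublist_left hsh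
    have huY : u <+ Y := huz.trans hzY
    obtain ⟨c, d, hcd⟩ := ih (hwz.trans hzY)
    have hlen : z.length = u.length + w.length := shuffle_length hsh
    have hcnt : z.count top = u.count top + w.count top := shuffle_count hsh top
    have hwle : w.count top ≤ w.length := List.count_le_length
    set sw := w.length - w.count top with hsw
    rw [hS] at hu
    simp only [Set.mem_union, Set.mem_setOf_eq] at hu
    rcases hu with ⟨i, hui | hui⟩ | ⟨i, j, hij, hui | hui⟩
    · -- u = replicate m i
      by_cases hi : i = top
      · have hui' : u = List.replicate m top := by rw [hui, hi]
        have hcu : u.count top = m := by simp [hui', List.count_replicate]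
        have hlu : u.length = m := by simp [hui']
        refine ⟨c + 1, d, ?_⟩
        have hs : z.length - z.count top = sw := by omega
        rw [hs, hcnt, hcu, hcd]; ring
      · exfalso
        have h1 := huY.count_le i
        have h2 : u.count i = m := by simp [hui, List.count_replicate]
        have h3 := hcYtop i hi
        omega
    · -- u = replicate (m+1) i
      by_cases hi : i = top
      · have hui' : u = List.replicate (m+1) top := by rw [hui, hi]
        have hcu : u.count top = m + 1 := by simp [hui', List.count_replicate]
        have hlu : u.length = m + 1 := by simp [hui']
        refine ⟨c, d + 1, ?_⟩
        have hs : z.length - z.count top = sw := by omega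
        rw [hs, hcnt, hcu, hcd]; ring
      · exfalso
        have h1 := huY.count_le i
        have h2 : u.count i = m + 1 := by simp [hui, List.count_replicate]
        have h3 := hcYtop i hi
        omega
    · -- u = i :: replicate (m-1) j
      by_cases hj : j = top
      · have hui' : u = i :: List.replicate (m-1) top := by rw [hui, hj]
        have hij' : i ≠ top := hj ▸ hij
        have hcu : u.count top = m - 1 := by
          simp [hui', List.count_cons, List.count_replicate, hij']
        have hlu : u.length = m := by
          rw [hui']
          simp only [List.length_cons, List.length_replicate]
          omega
        refine ⟨c, d, ?_⟩
        have hs : z.length - z.count top = sw + 1 := by omega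
        rw [hs, hcnt, hcu, hcd]; ring
      · exfalso
        by_cases hj0 : j = z0
        · have hui' : u = i :: List.replicate (m-1) z0 := by rw [hui, hj0]
          have hij0 : i ≠ z0 := hj0 ▸ hij
          rw [hui'] at huY
          exact hpos1 i hij0 huY
        · have h1 := huY.count_le j
          have h2 : u.count j = m - 1 := by
            simp [List.count_cons, List.count_replicate, hui, hij]
          have h3 := hcYmid j hj hj0
          omega
    · -- u = replicate (m-1) j ++ [i]
      by_cases hj : j = top
      · have hui' : u = List.replicate (m-1) top ++ [i] := by rw [hui, hj]
        have hij' : i ≠ top := hj ▸ hij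
        have hcu : u.count top = m - 1 := by
          have h4a : [i].count top = 0 := by
            rw [List.count_eq_zero]
            simp [Ne.symm hij']
          simp [hui', List.count_append, List.count_replicate, h4a]
        have hlu : u.length = m := by
          rw [hui']
          simp only [List.length_append, List.length_replicate, List.length_cons,
            List.length_nil]
          omega
        refine ⟨c, d, ?_⟩
        have hs : z.length - z.count top = sw + 1 := by omega
        rw [hs, hcnt, hcu, hcd]; ring
      · exfalso
        by_cases hj0 : j = z0
        · have hui' : u = List.replicate (m-1) z0 ++ [i] := by rw [hui, hj0]
          have hij0 : i ≠ z0 := hj0 ▸ hij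
          rw [hui'] at huY
          exact hpos2 i hij0 huY
        · have h1 := huY.count_le j
          have h2 : u.count j = m - 1 := by
            have h4a : [i].count j = 0 := by
              rw [List.count_eq_zero]
              simp [Ne.symm hij]
            simp [hui, List.count_append, List.count_replicate, h4a]
          have h3 := hcYmid j hj hj0
          omega

lemma count_flatMap_le (q m n r : ℕ) (hq : 0 < q) (hn : n ≤ q) (c : Fin q) :
    ((List.range n).flatMap
      (fun k => List.replicate r (⟨k % q, Nat.mod_lt k hq⟩ : Fin q))).count c ≤ r := by
  induction n with
  | zero => simp
  | succ n ih =>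
    rw [List.range_succ, List.flatMap_append, List.count_append]
    have hn' : n ≤ q := by omega
    by_cases hc : c = (⟨n % q, Nat.mod_lt n hq⟩ : Fin q)
    · have h0 : ((List.range n).flatMap
          (fun k => List.replicate r (⟨k % q, Nat.mod_lt k hq⟩ : Fin q))).count c = 0 := by
        rw [List.count_eq_zero]
        intro hmem
        obtain ⟨k, hk, hk2⟩ := List.mem_flatMap.mp hmem
        rw [List.mem_range] at hk
        have h2 : c.val = k % q := by rw [List.eq_of_mem_replicate hk2]
        have h3 : c.val = n % q := by rw [hc]
        have h4 : k % q = k := Nat.mod_eq_of_lt (by omega)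
        have h5 : n % q = n := Nat.mod_eq_of_lt (by omega)
        omega
      have h6 : (([n] : List ℕ).flatMap
          (fun k => List.replicate r (⟨k % q, Nat.mod_lt k hq⟩ : Fin q))).count c ≤ r := by
        simp only [List.flatMap_cons, List.flatMap_nil, List.append_nil,
          List.count_replicate]
        split <;> omega
      omega
    · have h6 : (([n] : List ℕ).flatMap
          (fun k => List.replicate r (⟨k % q, Nat.mod_lt k hq⟩ : Fin q))).count c = 0 := by
        simp only [List.flatMap_cons, List.flatMap_nil, List.append_nil]
        rw [List.count_eq_zero]
        intro hmem
        exact hc (List.eq_of_mem_replicate hmem)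
      have h7 := ih hn'
      omega

lemma cast_helper (q m : ℕ) (hq : 2 ≤ q) (hm : 3 ≤ m) :
    (((q-1)*(m-2) + (q * m ^ 2 - 3 * q * m + 3 * m + 2 * q - 4) + 1 : ℕ) : ℤ)
      = (q : ℤ) * m ^ 2 - 2 * q * m + 2 * m - 1 := by
  obtain ⟨a, rfl⟩ : ∃ a, q = a + 2 := ⟨q - 2, by omega⟩
  obtain ⟨b, rfl⟩ : ∃ b, m = b + 3 := ⟨m - 3, by omega⟩
  have e : (a+2) * (b+3) ^ 2 = 3 * (a+2) * (b+3) + ((a+2)*(b*b+3*b)) := by ring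
  have hN : (a+2) * (b+3) ^ 2 - 3 * (a+2) * (b+3) + 3 * (b+3) + 2 * (a+2) - 4
      = (a+2)*(b*b+3*b) + 3*b + 2*a + 9 := by
    rw [e]
    generalize 3 * (a+2) * (b+3) = A
    generalize (a+2)*(b*b+3*b) = B
    omega
  rw [hN]
  have e1 : a + 2 - 1 = a + 1 := rfl
  have e2 : b + 3 - 2 = b + 1 := rfl
  rw [e1, e2]
  push_cast
  ring

end ProtoAux

/-- For `q ≥ 2`, `m ≥ 3` and the prototypical set `S`, the word
`y = x₁^{m-2} x₂^{m-2} ⋯ x_{q-1}^{m-2} x_q^{qm² - 3qm + 3m + 2q - 4} x₁`, which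
has length `qm² - 2qm + 2m - 1`, is not in `S^†`. -/
theorem proto_extremal_word (q m : ℕ) (hq : 2 ≤ q) (hm : 3 ≤ m)
    (S : Set (List (Fin q)))
    (hS : S = {w | ∃ i : Fin q, w = List.replicate m i ∨ w = List.replicate (m + 1) i} ∪
              {w | ∃ i j : Fin q, i ≠ j ∧
                (w = i :: List.replicate (m - 1) j ∨
                 w = List.replicate (m - 1) j ++ [i])})
    (y : List (Fin q))
    (hy : y = ((List.range (q - 1)).flatMap
            (fun k => List.replicate (m - 2) (⟨k % q, Nat.mod_lt k (by omega)⟩ : Fin q)))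
          ++ List.replicate (q * m ^ 2 - 3 * q * m + 3 * m + 2 * q - 4)
              (⟨q - 1, by omega⟩ : Fin q)
          ++ [(⟨0, by omega⟩ : Fin q)]) :
    (y.length : ℤ) = (q : ℤ) * m ^ 2 - 2 * q * m + 2 * m - 1 ∧ ¬ IterShuffle S y := by
  have hq0 : 0 < q := by omega
  set top : Fin q := (⟨q - 1, by omega⟩ : Fin q) with htopdef
  set z0 : Fin q := (⟨0, by omega⟩ : Fin q) with hz0def
  set N : ℕ := q * m ^ 2 - 3 * q * m + 3 * m + 2 * q - 4 with hNdef
  set B : List (Fin q) := (List.range (q - 1)).flatMap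
      (fun k => List.replicate (m - 2) (⟨k % q, Nat.mod_lt k hq0⟩ : Fin q)) with hBdef
  set R : List (Fin q) := (List.map Nat.succ (List.range (q - 2))).flatMap
      (fun k => List.replicate (m - 2) (⟨k % q, Nat.mod_lt k hq0⟩ : Fin q)) with hRdef
  have hyeq : y = (B ++ List.replicate N top) ++ [z0] := hy
  have hne : top ≠ z0 := by
    intro h
    have h1 := congrArg Fin.val h
    rw [htopdef, hz0def] at h1
    simp at h1
    omega
  have hrange : List.range (q-1) = 0 :: List.map Nat.succ (List.range (q-2)) := by
    have h : q - 1 = (q - 2) + 1 := by omega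
    rw [h, List.range_succ_eq_map]
  have hz0eq : (⟨0 % q, Nat.mod_lt 0 hq0⟩ : Fin q) = z0 := by
    rw [hz0def]
    exact Fin.ext (by simp)
  have hBsplit : B = List.replicate (m-2) z0 ++ R := by
    rw [hBdef, hRdef, hrange]
    simp only [List.flatMap_cons]
    rw [hz0eq]
  have hR0 : z0 ∉ R := by
    rw [hRdef]
    intro hmem
    obtain ⟨k, hk, hk2⟩ := List.mem_flatMap.mp hmem
    obtain ⟨k', hk', rfl⟩ := List.mem_map.mp hk
    rw [List.mem_range] at hk'
    have h1 : (0 : ℕ) = Nat.succ k' % q :=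
      congrArg Fin.val (List.eq_of_mem_replicate hk2)
    have h2 : Nat.succ k' % q = k' + 1 := Nat.mod_eq_of_lt (by omega)
    omega
  have hmemB : ∀ x : Fin q, x ∈ B → x.val < q - 1 := by
    intro x hx
    rw [hBdef] at hx
    obtain ⟨k, hk, hk2⟩ := List.mem_flatMap.mp hx
    rw [List.mem_range] at hk
    have h1 : x.val = k % q := by rw [List.eq_of_mem_replicate hk2]
    have h2 : k % q = k := Nat.mod_eq_of_lt (by omega)
    omega
  have hBtop : B.count top = 0 := by
    rw [List.count_eq_zero]
    intro hmem
    have h3 : top.val < q - 1 := hmemB top hmem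
    rw [htopdef] at h3
    simp at h3
  have hBle : ∀ c : Fin q, B.count c ≤ m - 2 := by
    intro cc
    rw [hBdef]
    exact ProtoAux.count_flatMap_le q m (q-1) (m-2) hq0 (by omega) cc
  have hlenB : B.length = (q-1)*(m-2) := by
    rw [hBdef]
    simp [List.length_flatMap, Function.comp_def, List.map_const', List.sum_replicate,
      smul_eq_mul]
  have hylen : y.length = (q-1)*(m-2) + N + 1 := by
    rw [hyeq]
    simp only [List.length_append, List.length_replicate, List.length_cons,
      List.length_nil, hlenB]
  have hycount : y.count top = N := by
    rw [hyeq, List.count_append, List.count_append, hBtop, List.count_replicate]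
    have h1 : [z0].count top = 0 := by
      rw [List.count_eq_zero]
      simp [hne]
    simp [h1]
  constructor
  · rw [hylen, hNdef]
    exact ProtoAux.cast_helper q m hq hm
  · intro hIter
    obtain ⟨c, d, hcd⟩ := ProtoAux.invariant q m hm S hS top z0 hne B R N hBsplit hR0
      hBtop hBle y hIter (by rw [hyeq])
    rw [hycount, hylen, ProtoAux.sub_helper] at hcd
    rw [hNdef] at hcd
    exact ProtoAux.arith_main q m c d hq hm hcd
end

section
/- Let q ≥ 1, m ≥ 3, Σ = {x_1, …, x_q}, and let S = ⋃_{i=1}^q {x_i^m, x_i^{m+1}} ∪ ⋃_{i ≠ j} {x_i x_j^{m−1}, x_j^{m−1} x_i}. Then every word y over Σ whose length is a multiple of m and is at least (q−1)m² − 2qm + 3m can be written as y ∈ w ⧢ z, where w is a word in S^† and z is a word of length exactly (q−1)m² − 2qm + 3m. -/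
lemma shuffle_nil_left {α : Type*} : ∀ v : List α, Shuffle [] v v
  | [] => Shuffle.nil
  | _ :: v => Shuffle.right (shuffle_nil_left v)

lemma shuffle_length {α : Type*} {u v w : List α} (h : Shuffle u v w) :
    u.length + v.length = w.length := by
  induction h with
  | nil => rfl
  | left _ ih => simp only [List.length_cons, ← ih]; ring
  | right _ ih => simp only [List.length_cons, ← ih]; ring

lemma sublist_shuffle {α : Type*} {u y : List α} (h : List.Sublist u y) :
    ∃ y', Shuffle u y' y := by
  induction h with
  | slnil => exact ⟨[], Shuffle.nil⟩
  | cons a _ ih => obtain ⟨y', hy'⟩ := ih; exact ⟨a :: y', Shuffle.right hy'⟩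
  | cons_cons a _ ih => obtain ⟨y', hy'⟩ := ih; exact ⟨y', Shuffle.left hy'⟩

lemma shuffle_assoc {α : Type*} {u s t : List α} (h : Shuffle u s t) :
    ∀ {v w : List α}, Shuffle v w s → ∃ r, Shuffle u v r ∧ Shuffle r w t := by
  induction h with
  | nil => intro v w h2; cases h2; exact ⟨[], Shuffle.nil, Shuffle.nil⟩
  | left _ ih =>
      intro v w h2
      obtain ⟨r, h3, h4⟩ := ih h2
      exact ⟨_ :: r, Shuffle.left h3, Shuffle.left h4⟩
  | @right a u s t _ ih =>
      intro v w h2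
      cases h2 with
      | left h2 =>
          obtain ⟨r, h3, h4⟩ := ih h2
          exact ⟨a :: r, Shuffle.right h3, Shuffle.left h4⟩
      | right h2 =>
          obtain ⟨r, h3, h4⟩ := ih h2
          exact ⟨r, h3, Shuffle.right h4⟩

lemma list_pigeonhole {q k : ℕ} (y : List (Fin q)) (h : q * k < y.length) :
    ∃ i : Fin q, k + 1 ≤ y.count i := by
  by_contra hc
  push_neg at hc
  have hlen : y.length = ∑ i : Fin q, y.count i := by
    have := Multiset.sum_count_eq_card (s := (Finset.univ : Finset (Fin q)))
      (m := (↑y : Multiset (Fin q))) (fun a _ => Finset.mem_univ a)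
    simpa using this.symm
  have : y.length ≤ ∑ _i : Fin q, k := by
    rw [hlen]
    exact Finset.sum_le_sum fun i _ => Nat.lt_succ_iff.mp (hc i)
  simp only [Finset.sum_const, Finset.card_univ, Fintype.card_fin, smul_eq_mul] at this
  omega

/-- For `q ≥ 1`, `m ≥ 3` and the prototypical set `S`, every word `y` whose
length is a multiple of `m` and at least `(q-1)m² - 2qm + 3m` can be written as
a shuffle of a word `w ∈ S^†` with a word `z` of length exactly
`(q-1)m² - 2qm + 3m`. -/
theorem split_off_iterShuffle (q m : ℕ) (hq : 1 ≤ q) (hm : 3 ≤ m)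
    (S : Set (List (Fin q)))
    (hS : S = {w | ∃ i : Fin q, w = List.replicate m i ∨ w = List.replicate (m + 1) i} ∪
              {w | ∃ i j : Fin q, i ≠ j ∧
                (w = i :: List.replicate (m - 1) j ∨
                 w = List.replicate (m - 1) j ++ [i])}) :
    ∀ y : List (Fin q), m ∣ y.length →
      ((q : ℤ) - 1) * m ^ 2 - 2 * q * m + 3 * m ≤ (y.length : ℤ) →
      ∃ w z : List (Fin q), IterShuffle S w ∧
        ((z.length : ℤ) = ((q : ℤ) - 1) * m ^ 2 - 2 * q * m + 3 * m) ∧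
        Shuffle w z y := by
  obtain ⟨a, rfl⟩ : ∃ a, q = a + 1 := ⟨q - 1, by omega⟩
  obtain ⟨b, rfl⟩ : ∃ b, m = b + 3 := ⟨m - 3, by omega⟩
  set n : ℕ := (a * (b + 1) + 1) * (b + 3) with hn
  have hcast : (n : ℤ) = (((a + 1 : ℕ) : ℤ) - 1) * ((b + 3 : ℕ) : ℤ) ^ 2 -
      2 * ((a + 1 : ℕ) : ℤ) * ((b + 3 : ℕ) : ℤ) + 3 * ((b + 3 : ℕ) : ℤ) := by
    rw [hn]; push_cast; ring
  have key : ∀ k, ∀ y : List (Fin (a + 1)), y.length = k → (b + 3) ∣ y.length →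
      n ≤ y.length →
      ∃ w z : List (Fin (a + 1)), IterShuffle S w ∧ z.length = n ∧ Shuffle w z y := by
    intro k
    induction k using Nat.strong_induction_on with
    | _ k ih =>
      intro y hyk hdvd hge
      rcases eq_or_lt_of_le hge with heq | hlt
      · exact ⟨[], y, IterShuffle.nil, heq.symm, shuffle_nil_left y⟩
      · have hdn : (b + 3) ∣ n := ⟨a * (b + 1) + 1, by rw [hn]; ring⟩
        have hnm : n + (b + 3) ≤ y.length := by
          obtain ⟨c, hc⟩ := hdvd
          obtain ⟨d, hd⟩ := hdn
          have hdc : d < c := by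
            by_contra hba
            push_neg at hba
            have : y.length ≤ n := by
              rw [hc, hd]
              exact Nat.mul_le_mul_left _ hba
            omega
          rw [hc, hd]
          calc (b + 3) * d + (b + 3) = (b + 3) * (d + 1) := by ring
            _ ≤ (b + 3) * c := Nat.mul_le_mul_left _ hdc
        have hpq : (a + 1) * (b + 3 - 1) < y.length := by
          have e1 : b + 3 - 1 = b + 2 := by omega
          rw [e1]
          have h2 : (a + 1) * (b + 2) + 1 ≤ n + (b + 3) := by
            rw [hn]
            calc (a + 1) * (b + 2) + 1
                ≤ (a + 1) * (b + 2) + 1 + (a * b * b + 3 * a * b + a + b + 3) :=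
                  Nat.le_add_right _ _
              _ = (a * (b + 1) + 1) * (b + 3) + (b + 3) := by ring
          omega
        obtain ⟨i, hi⟩ := list_pigeonhole y hpq
        have hcnt : b + 3 ≤ y.count i := by omega
        have hsub : List.Sublist (List.replicate (b + 3) i) y :=
          List.replicate_sublist_iff.mpr hcnt
        obtain ⟨y', hy'⟩ := sublist_shuffle hsub
        have hlen : (b + 3) + y'.length = y.length := by
          have := shuffle_length hy'
          simpa using this
        have hy'dvd : (b + 3) ∣ y'.length := by
          have he : y'.length = y.length - (b + 3) := by omega
          rw [he]
          exact Nat.dvd_sub hdvd dvd_rfl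
        obtain ⟨w, z, hw, hz, hsh⟩ := ih y'.length (by omega) y' rfl hy'dvd (by omega)
        obtain ⟨r, hr1, hr2⟩ := shuffle_assoc hy' hsh
        refine ⟨r, z, ?_, hz, hr2⟩
        refine IterShuffle.step ?_ hw hr1
        rw [hS]
        exact Or.inl ⟨i, Or.inl rfl⟩
  intro y hdvd hge
  have hge' : n ≤ y.length := by
    have : (n : ℤ) ≤ (y.length : ℤ) := by rw [hcast]; exact_mod_cast hge
    exact_mod_cast this
  obtain ⟨w, z, hw, hz, hsh⟩ := key y.length y rfl hdvd hge'
  exact ⟨w, z, hw, by rw [hz, hcast], hsh⟩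
end

section
/- Let q ≥ 2, m ≥ 3, Σ = {x_1, …, x_q}, and let S = ⋃_{i=1}^q {x_i^m, x_i^{m+1}} ∪ ⋃_{i ≠ j} {x_i x_j^{m−1}, x_j^{m−1} x_i}. Let t(S) denote the number of words over Σ not in S^†. Then t(S) ≥ (q^{m²+m+1} − q^{m²+m} + q^{m+1} − q^{2m+1} + q^m − q) / ((q−1)(q^m − 1)(q^{m+1} − 1)). -/
namespace ShuffleAux

theorem shuffle_nil_left {α : Type*} (v : List α) : Shuffle [] v v := by
  induction v with
  | nil => exact .nil
  | cons a v ih => exact .right ih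

theorem shuffle_prepend_left {α : Type*} {u v w : List α} (x : List α) (h : Shuffle u v w) :
    Shuffle (x ++ u) v (x ++ w) := by
  induction x with
  | nil => exact h
  | cons a x ih => exact .left ih

theorem shuffle_prepend_right {α : Type*} {u v w : List α} (x : List α) (h : Shuffle u v w) :
    Shuffle u (x ++ v) (x ++ w) := by
  induction x with
  | nil => exact h
  | cons a x ih => exact .right ih

theorem shuffle_append {α : Type*} (u v : List α) : Shuffle u v (u ++ v) := by
  simpa using shuffle_prepend_left u (shuffle_nil_left v)

theorem shuffle_length {α : Type*} {u v w : List α} (h : Shuffle u v w) :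
    w.length = u.length + v.length := by
  induction h with
  | nil => rfl
  | left _ ih => simp [ih]; omega
  | right _ ih => simp [ih]; omega

/-- remove the first `n` occurrences of `a` -/
def eraseN {α : Type*} [DecidableEq α] (a : α) : ℕ → List α → List α
  | 0, l => l
  | _ + 1, [] => []
  | n + 1, b :: l => if b = a then eraseN a n l else b :: eraseN a (n + 1) l

theorem eraseN_shuffle {α : Type*} [DecidableEq α] (a : α) (n : ℕ) (l : List α)
    (h : n ≤ l.count a) : Shuffle (List.replicate n a) (eraseN a n l) l := by
  induction l generalizing n with
  | nil => simp at h; subst h; exact Shuffle.nil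
  | cons b l ih =>
    cases n with
    | zero => exact shuffle_nil_left _
    | succ n =>
      by_cases hb : b = a
      · subst hb
        rw [show eraseN b (n+1) (b :: l) = eraseN b n l from by simp [eraseN]]
        exact Shuffle.left (ih n (by simp [List.count_cons] at h ⊢; omega))
      · rw [show eraseN a (n+1) (b :: l) = b :: eraseN a (n+1) l from by simp [eraseN, hb]]
        exact Shuffle.right (ih (n+1) (by simpa [List.count_cons, hb] using h))

theorem count_eraseN_self {α : Type*} [DecidableEq α] (a : α) (n : ℕ) (l : List α) :
    (eraseN a n l).count a = l.count a - n := by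
  induction l generalizing n with
  | nil => cases n <;> simp [eraseN]
  | cons b l ih =>
    cases n with
    | zero => simp [eraseN]
    | succ n =>
      by_cases hb : b = a <;> simp [eraseN, hb, ih, List.count_cons] <;> omega

theorem count_eraseN_ne {α : Type*} [DecidableEq α] {a c : α} (hc : c ≠ a) (n : ℕ) (l : List α) :
    (eraseN a n l).count c = l.count c := by
  induction l generalizing n with
  | nil => cases n <;> simp [eraseN]
  | cons b l ih =>
    cases n with
    | zero => simp [eraseN]
    | succ n =>
      by_cases hb : b = a <;> simp [eraseN, hb, ih, List.count_cons, hc, Ne.symm hc]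

theorem length_eraseN {α : Type*} [DecidableEq α] (a : α) (n : ℕ) (l : List α)
    (h : n ≤ l.count a) : (eraseN a n l).length = l.length - n := by
  induction l generalizing n with
  | nil => cases n <;> simp [eraseN]
  | cons b l ih =>
    cases n with
    | zero => simp [eraseN]
    | succ n =>
      by_cases hb : b = a
      · subst hb
        simp only [List.count_cons_self] at h
        rw [show eraseN b (n+1) (b :: l) = eraseN b n l from by simp [eraseN]]
        rw [ih n (by omega)]
        simp only [List.length_cons]
        omega
      · have h' : n + 1 ≤ l.count a := by simpa [List.count_cons, hb] using h
        rw [show eraseN a (n+1) (b :: l) = b :: eraseN a (n+1) l from by simp [eraseN, hb]]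
        simp only [List.length_cons, ih (n+1) h']
        have := (List.count_le_length : l.count a ≤ l.length)
        omega

/-! ### Generators -/

section Gen
variable (q m : ℕ) (S : Set (List (Fin q)))
variable (hS : S = {w | ∃ i : Fin q, w = List.replicate m i ∨ w = List.replicate (m + 1) i} ∪
              {w | ∃ i j : Fin q, i ≠ j ∧
                (w = i :: List.replicate (m - 1) j ∨
                 w = List.replicate (m - 1) j ++ [i])})

include hS in
theorem gen1 (i : Fin q) : List.replicate m i ∈ S := by
  rw [hS]; exact Set.mem_union_left _ ⟨i, Or.inl rfl⟩

include hS in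
theorem gen2 (i : Fin q) : List.replicate (m+1) i ∈ S := by
  rw [hS]; exact Set.mem_union_left _ ⟨i, Or.inr rfl⟩

include hS in
theorem gen3 {p j : Fin q} (h : p ≠ j) : p :: List.replicate (m-1) j ∈ S := by
  rw [hS]; exact Set.mem_union_right _ ⟨p, j, h, Or.inl rfl⟩

include hS in
theorem gen4 {p j : Fin q} (h : p ≠ j) : List.replicate (m-1) j ++ [p] ∈ S := by
  rw [hS]; exact Set.mem_union_right _ ⟨p, j, h, Or.inr rfl⟩

include hS in
theorem iter_replicate (a b : ℕ) (i : Fin q) :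
    IterShuffle S (List.replicate (a * m + b * (m+1)) i) := by
  induction a with
  | zero =>
    induction b with
    | zero => simpa using IterShuffle.nil
    | succ b ihb =>
      have e : 0 * m + (b+1) * (m+1) = (m+1) + (0 * m + b * (m+1)) := by ring
      rw [e, List.replicate_add]
      exact IterShuffle.step (gen2 q m S hS i) ihb (shuffle_append _ _)
  | succ a iha =>
    have e : (a+1) * m + b * (m+1) = m + (a * m + b * (m+1)) := by ring
    rw [e, List.replicate_add]
    exact IterShuffle.step (gen1 q m S hS i) iha (shuffle_append _ _)

end Gen

/-! ### Numerical semigroup generated by m and m+1 -/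

theorem rep_iff (m : ℕ) (hm : 3 ≤ m) (n : ℕ) :
    (∃ a b, n = a * m + b * (m + 1)) ↔ n % m ≤ n / m := by
  have hm0 : 0 < m := by omega
  constructor
  · rintro ⟨a, b, rfl⟩
    have hb := Nat.div_add_mod b m
    have hr : b % m < m := Nat.mod_lt b hm0
    have key : a * m + b * (m + 1) = (a + (b/m) * m + (b/m) + (b%m)) * m + b % m := by
      calc a * m + b * (m + 1) = a * m + (m * (b/m) + b%m) * (m+1) := by rw [hb]
      _ = (a + (b/m) * m + (b/m) + (b%m)) * m + b % m := by ring
    rw [key, Nat.mul_add_mod_of_lt hr, Nat.add_comm _ (b % m),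
      Nat.add_mul_div_right _ _ hm0, Nat.div_eq_of_lt hr]
    simp
  · intro h
    refine ⟨n / m - n % m, n % m, ?_⟩
    have hdm := Nat.div_add_mod n m
    have h1 : (n / m - n % m) * m = n / m * m - n % m * m := Nat.sub_mul _ _ _
    have h2 : n % m * (m + 1) = n % m * m + n % m := by ring
    have h3 : n % m * m ≤ n / m * m := Nat.mul_le_mul_right m h
    have hc1 : n / m * m = m * (n / m) := Nat.mul_comm _ _
    omega

theorem rep_of_ge (m : ℕ) (hm : 3 ≤ m) {n : ℕ} (h : n % m ≤ n / m) :
    ∃ a b, n = a * m + b * (m+1) := (rep_iff m hm n).mpr h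

theorem mod_le_div_of_ge (m : ℕ) (hm : 3 ≤ m) {n : ℕ} (h : m * m - m ≤ n) : n % m ≤ n / m := by
  by_contra hc
  push_neg at hc
  have hdm := Nat.div_add_mod n m
  have hr : n % m < m := Nat.mod_lt n (by omega)
  have h3 : n / m * m + m ≤ n % m * m := by
    have h4 := Nat.mul_le_mul_right m (show n / m + 1 ≤ n % m by omega)
    have h5 : (n / m + 1) * m = n / m * m + m := by ring
    omega
  have h6 : n % m * m ≤ (m - 1) * m := Nat.mul_le_mul_right m (by omega)
  have h7 : (m - 1) * m = m * m - m := by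
    have h8 : (m - 1 + 1) * m = m * m := by rw [show m - 1 + 1 = m from by omega]
    have h9 : (m - 1 + 1) * m = (m - 1) * m + m := by ring
    omega
  have hc1 : n / m * m = m * (n / m) := Nat.mul_comm _ _
  omega

theorem gap_lt (m : ℕ) (hm : 3 ≤ m) {n : ℕ} (h : n / m < n % m) : n < m * m := by
  have hdm := Nat.div_add_mod n m
  have hr : n % m < m := Nat.mod_lt n (by omega)
  have h1 : m * (n / m) ≤ m * (m - 2) := Nat.mul_le_mul_left m (by omega)
  have h2 : m * (m - 2) + m * 2 = m * m := by rw [← Nat.mul_add]; congr 1; omega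
  omega

/-! ### The absorption argument -/

section Absorb
variable (q m : ℕ) (S : Set (List (Fin q)))
variable (hS : S = {w | ∃ i : Fin q, w = List.replicate m i ∨ w = List.replicate (m + 1) i} ∪
              {w | ∃ i j : Fin q, i ≠ j ∧
                (w = i :: List.replicate (m - 1) j ∨
                 w = List.replicate (m - 1) j ++ [i])})

include hS in
theorem absorb (hm : 3 ≤ m) : ∀ N (y : List (Fin q)) (s : ℕ) (j : Fin q), y.length ≤ N →
    2 * m * (y.length - y.count j) + m * m ≤ s + y.count j →
    IterShuffle S (List.replicate s j ++ y) := by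
  intro N
  induction N with
  | zero =>
    intro y s j hlen hcond
    have : y = [] := List.length_eq_zero_iff.mp (by omega)
    subst this
    simp only [List.append_nil]
    obtain ⟨a, b, hab⟩ := rep_of_ge m hm (mod_le_div_of_ge m hm (n := s) (by simp at hcond; omega))
    rw [hab]; exact iter_replicate q m S hS a b j
  | succ N ihN =>
    intro y s j hlen hcond
    match y with
    | [] =>
      simp only [List.append_nil]
      obtain ⟨a, b, hab⟩ := rep_of_ge m hm (mod_le_div_of_ge m hm (n := s) (by simp at hcond; omega))
      rw [hab]; exact iter_replicate q m S hS a b j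
    | p :: δ =>
      by_cases hpj : p = j
      · subst hpj
        have e : List.replicate s p ++ p :: δ = List.replicate (s+1) p ++ δ := by
          rw [List.replicate_succ']; simp
        rw [e]
        apply ihN δ (s+1) p (by simp at hlen; omega)
        simp only [List.count_cons_self, List.length_cons] at hcond ⊢
        have : δ.length + 1 - (δ.count p + 1) = δ.length - δ.count p := by omega
        rw [this] at hcond
        omega
      · -- p ≠ j
        have hcj : (p :: δ).count j = δ.count j := by simp [List.count_cons, hpj]
        have htlen : δ.count j ≤ δ.length := List.count_le_length
        by_cases ht : m - 1 ≤ δ.count j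
        · -- use the generator p :: j^(m-1)
          have hsh : Shuffle (p :: List.replicate (m-1) j)
              (List.replicate s j ++ eraseN j (m-1) δ)
              (List.replicate s j ++ p :: δ) :=
            shuffle_prepend_right _ (Shuffle.left (eraseN_shuffle j (m-1) δ ht))
          refine IterShuffle.step (gen3 q m S hS hpj) ?_ hsh
          apply ihN (eraseN j (m-1) δ) s j
          · rw [length_eraseN j (m-1) δ ht]
            simp at hlen; omega
          · rw [length_eraseN j (m-1) δ ht, count_eraseN_self]
            simp only [List.length_cons] at hcond
            rw [hcj] at hcond
            have e1 : δ.length - (m-1) - (δ.count j - (m-1)) = δ.length - δ.count j := by omega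
            have e2 : δ.length + 1 - δ.count j = (δ.length - δ.count j) + 1 := by omega
            rw [e1]
            rw [e2, Nat.mul_add, Nat.mul_one] at hcond
            omega
        · -- few j's after p: use the generator j^(m-1) ++ [p]
          push_neg at ht
          have hs : m - 1 ≤ s := by
            simp only [List.length_cons, hcj] at hcond
            have e2 : δ.length + 1 - δ.count j = (δ.length - δ.count j) + 1 := by omega
            rw [e2, Nat.mul_add, Nat.mul_one] at hcond
            omega
          have hsh : Shuffle (List.replicate (m-1) j ++ [p])
              (List.replicate (s-(m-1)) j ++ δ)
              (List.replicate s j ++ p :: δ) := by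
            have h0 : Shuffle [p] δ (p :: δ) := Shuffle.left (shuffle_nil_left δ)
            have h1 := shuffle_prepend_right (List.replicate (s-(m-1)) j) h0
            have h2 := shuffle_prepend_left (List.replicate (m-1) j) h1
            rwa [← List.append_assoc, ← List.replicate_add,
              show (m-1) + (s-(m-1)) = s from by omega] at h2
          refine IterShuffle.step (gen4 q m S hS hpj) ?_ hsh
          apply ihN δ (s-(m-1)) j (by simp at hlen; omega)
          simp only [List.length_cons] at hcond
          rw [hcj] at hcond
          have e2 : δ.length + 1 - δ.count j = (δ.length - δ.count j) + 1 := by omega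
          rw [e2, Nat.mul_add, Nat.mul_one] at hcond
          omega

theorem length_eq_sum_count (w : List (Fin q)) : ∑ i : Fin q, w.count i = w.length := by
  induction w with
  | nil => simp
  | cons a w ih =>
    simp only [List.count_cons, List.length_cons]
    rw [Finset.sum_add_distrib, ih]
    simp

include hS in
theorem big_count (hm : 3 ≤ m) (hq : 2 ≤ q) :
    ∀ N (w : List (Fin q)) (j : Fin q), w.length ≤ N →
    2 * m * (q * m) + m * m ≤ w.count j → IterShuffle S w := by
  intro N
  induction N with
  | zero =>
    intro w j hlen hcj
    have : w = [] := List.length_eq_zero_iff.mp (by omega)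
    subst this
    simp at hcj
    omega
  | succ N ihN =>
    intro w j hlen hcj
    by_cases hex : ∃ i, i ≠ j ∧ m ≤ w.count i
    · obtain ⟨i, hij, hcnt⟩ := hex
      have hlw : m ≤ w.length := le_trans hcnt (List.count_le_length)
      have hsh := eraseN_shuffle i m w hcnt
      refine IterShuffle.step (gen1 q m S hS i) ?_ hsh
      apply ihN (eraseN i m w) j
      · rw [length_eraseN i m w hcnt]; omega
      · rw [count_eraseN_ne (Ne.symm hij) m w]
        exact hcj
    · push_neg at hex
      have hsum := length_eq_sum_count q w
      have hbound : w.length - w.count j ≤ q * m := by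
        have h1 : ∑ i ∈ (Finset.univ : Finset (Fin q)).erase j, w.count i ≤
            ∑ _i ∈ (Finset.univ : Finset (Fin q)).erase j, m := by
          apply Finset.sum_le_sum
          intro i hi
          have := hex i (Finset.ne_of_mem_erase hi)
          omega
        have h3 : ∑ i ∈ (Finset.univ : Finset (Fin q)).erase j, w.count i + w.count j
            = w.length := by
          rw [Finset.sum_erase_add _ _ (Finset.mem_univ j)]
          exact hsum
        simp only [Finset.sum_const, smul_eq_mul,
          Finset.card_erase_of_mem (Finset.mem_univ j), Finset.card_univ,
          Fintype.card_fin] at h1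
        have h4 : (q - 1) * m ≤ q * m := Nat.mul_le_mul_right m (by omega)
        omega
      have := absorb q m S hS hm w.length w 0 j le_rfl (by
        have h5 : 2 * m * (w.length - w.count j) ≤ 2 * m * (q * m) :=
          Nat.mul_le_mul_left (2*m) hbound
        omega)
      simpa using this

include hS in
theorem iter_of_long (hm : 3 ≤ m) (hq : 2 ≤ q) (w : List (Fin q))
    (hlen : q * (2 * m * (q * m) + m * m) ≤ w.length) : IterShuffle S w := by
  have hj : ∃ j, 2 * m * (q * m) + m * m ≤ w.count j := by
    by_contra h
    push_neg at h
    have hsum := length_eq_sum_count q w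
    have h1 : ∑ i : Fin q, w.count i ≤ ∑ _i : Fin q, (2 * m * (q * m) + m * m - 1) :=
      Finset.sum_le_sum (fun i _ => by have := h i; omega)
    simp only [Finset.sum_const, smul_eq_mul, Finset.card_univ, Fintype.card_fin] at h1
    have h2 : q * (2 * m * (q * m) + m * m - 1) + q * 1 = q * (2 * m * (q * m) + m * m) := by
      rw [← Nat.mul_add]
      congr 1
      have : 0 < m := by omega
      have : 0 < m * m := Nat.mul_pos this this
      omega
    omega
  obtain ⟨j, hj⟩ := hj
  exact big_count q m S hS hm hq w.length w j le_rfl hj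

include hS in
theorem length_mem_S (u : List (Fin q)) (hu : u ∈ S) (hm : 3 ≤ m) :
    u.length = m ∨ u.length = m + 1 := by
  rw [hS] at hu
  rcases hu with ⟨i, h | h⟩ | ⟨i, j, hij, h | h⟩ <;> subst h <;> simp <;> omega

include hS in
theorem iter_length (hm : 3 ≤ m) (y : List (Fin q)) (hy : IterShuffle S y) :
    ∃ a b, y.length = a * m + b * (m + 1) := by
  induction hy with
  | nil => exact ⟨0, 0, by simp⟩
  | @step u w y hu hw hsh ih =>
    obtain ⟨a, b, hab⟩ := ih
    rcases length_mem_S q m S hS u hu hm with h | h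
    · exact ⟨a + 1, b, by rw [shuffle_length hsh, hab, h]; ring⟩
    · exact ⟨a, b + 1, by rw [shuffle_length hsh, hab, h]; ring⟩

end Absorb

/-! ### Counting -/

theorem ncard_length_eq (q n : ℕ) :
    {w : List (Fin q) | w.length = n}.ncard = q ^ n := by
  have e : {w : List (Fin q) | w.length = n} ≃ List.Vector (Fin q) n :=
    { toFun := fun x => ⟨x.1, x.2⟩
      invFun := fun v => ⟨v.1, v.2⟩
      left_inv := fun x => rfl
      right_inv := fun v => rfl }
  rw [← Nat.card_coe_set_eq, Nat.card_congr e, Nat.card_eq_fintype_card,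
    card_vector, Fintype.card_fin]

/-- the finset of gap lengths -/
def gapFinset (m : ℕ) : Finset ℕ := (Finset.range (m*m)).filter (fun n => n / m < n % m)

theorem gapwords_eq (q m : ℕ) (hm : 3 ≤ m) :
    {w : List (Fin q) | ¬ ∃ a b, w.length = a * m + b * (m+1)}
      = ⋃ n ∈ gapFinset m, {w : List (Fin q) | w.length = n} := by
  ext w
  simp only [Set.mem_setOf_eq, Set.mem_iUnion, gapFinset, Finset.mem_filter,
    Finset.mem_range, exists_prop]
  rw [rep_iff m hm w.length]
  constructor
  · intro h
    push_neg at h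
    exact ⟨w.length, ⟨gap_lt m hm h, h⟩, rfl⟩
  · rintro ⟨n, ⟨_, hn⟩, rfl⟩
    omega

theorem ncard_biUnion_eq {α : Type*} (F : Finset ℕ) (f : ℕ → Set α)
    (hfin : ∀ n, (f n).Finite)
    (hdisj : ∀ a b, a ≠ b → Disjoint (f a) (f b)) :
    (⋃ n ∈ F, f n).ncard = ∑ n ∈ F, (f n).ncard := by
  classical
  induction F using Finset.induction_on with
  | empty => simp
  | @insert a F ha ih =>
    rw [Finset.set_biUnion_insert, Finset.sum_insert ha]
    rw [Set.ncard_union_eq ?disj (hfin a) ?fin2, ih]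
    case disj =>
      apply Set.disjoint_iUnion_right.mpr
      intro n
      apply Set.disjoint_iUnion_right.mpr
      intro hn
      exact hdisj a n (by rintro rfl; exact ha hn)
    case fin2 =>
      apply Set.Finite.biUnion (F.finite_toSet)
      intro n _
      exact hfin n

theorem ncard_gapwords (q m : ℕ) (hm : 3 ≤ m) :
    {w : List (Fin q) | ¬ ∃ a b, w.length = a * m + b * (m+1)}.ncard
      = ∑ n ∈ gapFinset m, q ^ n := by
  rw [gapwords_eq q m hm,
    ncard_biUnion_eq (gapFinset m) _ (fun n => List.finite_length_eq (Fin q) n) ?_]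
  · exact Finset.sum_congr rfl (fun n _ => ncard_length_eq q n)
  · intro a b hab
    rw [Set.disjoint_left]
    intro w hwa hwb
    simp only [Set.mem_setOf_eq] at hwa hwb
    exact hab (hwa.symm.trans hwb)

theorem gap_sum (q m : ℕ) (hq : 2 ≤ q) (hm : 3 ≤ m) :
    ∑ n ∈ gapFinset m, (q : ℚ) ^ n =
    ((q : ℚ) ^ (m ^ 2 + m + 1) - (q : ℚ) ^ (m ^ 2 + m) + (q : ℚ) ^ (m + 1)
        - (q : ℚ) ^ (2 * m + 1) + (q : ℚ) ^ m - (q : ℚ)) /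
      (((q : ℚ) - 1) * ((q : ℚ) ^ m - 1) * ((q : ℚ) ^ (m + 1) - 1)) := by
  have hm0 : 0 < m := by omega
  set x : ℚ := (q : ℚ) with hxdef
  have hx1 : (1 : ℚ) < x := by
    rw [hxdef]; exact_mod_cast (show 1 < q by omega)
  have hxne : x ≠ 1 := ne_of_gt hx1
  have hxm : x ^ m ≠ 1 := ne_of_gt (one_lt_pow₀ hx1 (by omega))
  have hxm1 : x ^ (m+1) ≠ 1 := ne_of_gt (one_lt_pow₀ hx1 (by omega))
  have hsub : x - 1 ≠ 0 := sub_ne_zero.mpr hxne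
  have hsubm : x ^ m - 1 ≠ 0 := sub_ne_zero.mpr hxm
  have hsubm1 : x ^ (m+1) - 1 ≠ 0 := sub_ne_zero.mpr hxm1
  have hdivmod : ∀ a r : ℕ, a < m → r < m → (a * m + r) / m = a ∧ (a * m + r) % m = r := by
    intro a r _ hrm
    constructor
    · rw [Nat.add_comm, Nat.add_mul_div_right _ _ hm0, Nat.div_eq_of_lt hrm]
      omega
    · exact Nat.mul_add_mod_of_lt hrm
  have step1 : ∑ n ∈ gapFinset m, x ^ n
      = ∑ p ∈ (Finset.range m).sigma (fun a => Finset.Ioo a m), x ^ (p.1 * m + p.2) := by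
    apply Finset.sum_nbij' (fun n => (⟨n / m, n % m⟩ : Σ _ : ℕ, ℕ))
      (fun p => p.1 * m + p.2)
    · intro n hn
      simp only [gapFinset, Finset.mem_filter, Finset.mem_range] at hn
      simp only [Finset.mem_sigma, Finset.mem_range, Finset.mem_Ioo]
      exact ⟨Nat.div_lt_of_lt_mul hn.1, hn.2, Nat.mod_lt n hm0⟩
    · rintro ⟨a, r⟩ hp
      simp only [Finset.mem_sigma, Finset.mem_range, Finset.mem_Ioo] at hp
      obtain ⟨ha, har, hrm⟩ := hp
      simp only [gapFinset, Finset.mem_filter, Finset.mem_range]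
      obtain ⟨hdiv, hmod⟩ := hdivmod a r ha hrm
      have h1 : a * m ≤ (m-2) * m := Nat.mul_le_mul_right m (by omega)
      have h2 : (m-2) * m + 2 * m = m * m := by
        rw [← Nat.add_mul, show m - 2 + 2 = m from by omega]
      exact ⟨by omega, by rw [hdiv, hmod]; exact har⟩
    · intro n hn
      show n / m * m + n % m = n
      have h1 := Nat.div_add_mod n m
      have h2 : n / m * m = m * (n / m) := Nat.mul_comm _ _
      omega
    · rintro ⟨a, r⟩ hp
      simp only [Finset.mem_sigma, Finset.mem_range, Finset.mem_Ioo] at hp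
      obtain ⟨ha, har, hrm⟩ := hp
      obtain ⟨hdiv, hmod⟩ := hdivmod a r ha hrm
      show (⟨_, _⟩ : Σ _ : ℕ, ℕ) = _
      rw [hdiv, hmod]
    · intro n hn
      show x ^ n = x ^ (n / m * m + n % m)
      congr 1
      have h1 := Nat.div_add_mod n m
      have h2 : n / m * m = m * (n / m) := Nat.mul_comm _ _
      omega
  rw [step1, Finset.sum_sigma]
  have step2 : ∀ a ∈ Finset.range m,
      ∑ r ∈ Finset.Ioo a m, x ^ (a * m + r)
        = ((x^m)^a * x^m - (x^(m+1))^a * x) / (x - 1) := by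
    intro a ha
    simp only [Finset.mem_range] at ha
    calc ∑ r ∈ Finset.Ioo a m, x ^ (a * m + r)
        = ∑ r ∈ Finset.Ioo a m, x ^ (a * m) * x ^ r :=
          Finset.sum_congr rfl (fun r _ => pow_add x _ _)
      _ = x ^ (a * m) * ∑ r ∈ Finset.Ico (a+1) m, x ^ r := by
          rw [← Finset.mul_sum, Finset.Ico_add_one_left_eq_Ioo]
      _ = x ^ (a * m) * ((x ^ m - x ^ (a+1)) / (x - 1)) := by
          rw [geom_sum_Ico hxne (by omega)]
      _ = (x ^ (a * m) * (x ^ m - x ^ (a+1))) / (x - 1) := (mul_div_assoc _ _ _).symm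
      _ = ((x^m)^a * x^m - (x^(m+1))^a * x) / (x - 1) := by
          congr 1
          rw [mul_sub]
          congr 1
          · rw [← pow_mul, Nat.mul_comm m a]
          · rw [← pow_add, ← pow_mul, ← pow_succ]
            congr 1
            ring
  rw [Finset.sum_congr rfl step2, ← Finset.sum_div, Finset.sum_sub_distrib,
    ← Finset.sum_mul, ← Finset.sum_mul, geom_sum_eq hxm, geom_sum_eq hxm1,
    ← pow_mul, ← pow_mul]
  rw [show m * m = m ^ 2 from (sq m).symm, show (m + 1) * m = m ^ 2 + m from by ring]
  field_simp
  ring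

end ShuffleAux

open ShuffleAux in
/-- For `q ≥ 2`, `m ≥ 3` and the prototypical set `S`, the number `t(S)` of
words not in `S^†` satisfies
`t(S) ≥ (q^{m²+m+1} - q^{m²+m} + q^{m+1} - q^{2m+1} + q^m - q) /
((q-1)(q^m-1)(q^{m+1}-1))`. -/
theorem count_missing_lower_bound (q m : ℕ) (hq : 2 ≤ q) (hm : 3 ≤ m)
    (S : Set (List (Fin q)))
    (hS : S = {w | ∃ i : Fin q, w = List.replicate m i ∨ w = List.replicate (m + 1) i} ∪
              {w | ∃ i j : Fin q, i ≠ j ∧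
                (w = i :: List.replicate (m - 1) j ∨
                 w = List.replicate (m - 1) j ++ [i])}) :
    ((q : ℚ) ^ (m ^ 2 + m + 1) - (q : ℚ) ^ (m ^ 2 + m) + (q : ℚ) ^ (m + 1)
        - (q : ℚ) ^ (2 * m + 1) + (q : ℚ) ^ m - (q : ℚ)) /
      (((q : ℚ) - 1) * ((q : ℚ) ^ m - 1) * ((q : ℚ) ^ (m + 1) - 1))
    ≤ ({w : List (Fin q) | ¬ IterShuffle S w}.ncard : ℚ) := by
  have hfin : {w : List (Fin q) | ¬ IterShuffle S w}.Finite := by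
    apply (List.finite_length_lt (Fin q) (q * (2 * m * (q * m) + m * m))).subset
    intro w hw
    simp only [Set.mem_setOf_eq] at hw ⊢
    by_contra hlen
    exact hw (iter_of_long q m S hS hm hq w (by omega))
  have hsub : {w : List (Fin q) | ¬ ∃ a b, w.length = a * m + b * (m+1)}
      ⊆ {w : List (Fin q) | ¬ IterShuffle S w} := by
    intro w hw hit
    exact hw (iter_length q m S hS hm w hit)
  have hcard := Set.ncard_le_ncard hsub hfin
  rw [ncard_gapwords q m hm] at hcard
  calc ((q : ℚ) ^ (m ^ 2 + m + 1) - (q : ℚ) ^ (m ^ 2 + m) + (q : ℚ) ^ (m + 1)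
        - (q : ℚ) ^ (2 * m + 1) + (q : ℚ) ^ m - (q : ℚ)) /
      (((q : ℚ) - 1) * ((q : ℚ) ^ m - 1) * ((q : ℚ) ^ (m + 1) - 1))
      = ∑ n ∈ gapFinset m, (q : ℚ) ^ n := (gap_sum q m hq hm).symm
    _ = ((∑ n ∈ gapFinset m, q ^ n : ℕ) : ℚ) := by push_cast; rfl
    _ ≤ ({w : List (Fin q) | ¬ IterShuffle S w}.ncard : ℚ) := by
      exact_mod_cast hcard
end
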